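/- For every k ≥ 12, the sets X_k = {0, 1, 5} ∪ {6, 7, 9, 10, ..., k−4, k−3} ∪ {k} and Y_k = {0, 4, 5} ∪ {6, 9, 10, ..., k−4, k−3} ∪ {k−1, k} (as defined in the recursive family X_{k+1} = (X_k \ {k}) ∪ {k−2, k+1}, Y_{k+1} = (Y_k \ {k−1}) ∪ {k−2, k+1}, starting from homometric X₁₂, Y₁₂) are homometric: the multisets of pairwise distances of X_k and Y_k coincide. -/

import Mathlib

open Finset

/-- The multiset of pairwise distances `|x − y|` over pairs `x < y` of a finite
subset of `ℤ`. -/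
def distMultiset (S : Finset ℤ) : Multiset ℕ :=
  ((S ×ˢ S).filter fun p => p.1 < p.2).val.map fun p => (p.2 - p.1).natAbs

/-- The set `X_k = {0,1,5,6,7} ∪ {9,…,k−3} ∪ {k}`. -/
noncomputable def Xfam (k : ℤ) : Finset ℤ := ({0, 1, 5, 6, 7} : Finset ℤ) ∪ Finset.Icc 9 (k - 3) ∪ {k}

/-- The set `Y_k = {0,4,5,6} ∪ {9,…,k−3} ∪ {k−1,k}`. -/
noncomputable def Yfam (k : ℤ) : Finset ℤ := ({0, 4, 5, 6} : Finset ℤ) ∪ Finset.Icc 9 (k - 3) ∪ {k - 1, k}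

def D (a : ℤ) (S : Finset ℤ) : Multiset ℕ := S.val.map fun x => (a - x).natAbs

lemma D_HY (a : ℤ) : D a ({0, 4, 5, 6} : Finset ℤ) =
    {(a-0).natAbs, (a-4).natAbs, (a-5).natAbs, (a-6).natAbs} := rfl
lemma D_HX (a : ℤ) : D a ({0, 1, 5, 6, 7} : Finset ℤ) =
    {(a-0).natAbs, (a-1).natAbs, (a-5).natAbs, (a-6).natAbs, (a-7).natAbs} := rfl



lemma disjUnion_val' (s t : Finset (ℤ×ℤ)) (h : Disjoint s t) : (s.disjUnion t h).val = s.val + t.val := rfl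

lemma distMultiset_insert (a : ℤ) (S : Finset ℤ) (h : a ∉ S) :
    distMultiset (insert a S) = distMultiset S + D a S := by
  classical
  have key : ((insert a S ×ˢ insert a S).filter fun p => p.1 < p.2) =
      (((S ×ˢ S).filter fun p => p.1 < p.2) ∪
        ((S.filter (· < a)).image fun x => (x, a))) ∪
        ((S.filter (a < ·)).image fun y => (a, y)) := by
    ext ⟨x, y⟩
    simp only [mem_filter, mem_product, mem_insert, mem_union, mem_image]
    constructor
    · rintro ⟨⟨hx | hx, hy | hy⟩, hlt⟩
      · exact absurd (hx ▸ hy ▸ hlt) (lt_irrefl _)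
      · exact Or.inr ⟨y, ⟨hy, hx ▸ hlt⟩, by simp [hx]⟩
      · exact Or.inl (Or.inr ⟨x, ⟨hx, hy ▸ hlt⟩, by simp [hy]⟩)
      · exact Or.inl (Or.inl ⟨⟨hx, hy⟩, hlt⟩)
    · rintro ((⟨⟨hx, hy⟩, hlt⟩ | ⟨z, ⟨hz, hza⟩, hzxy⟩) | ⟨z, ⟨hz, haz⟩, hzxy⟩)
      · exact ⟨⟨Or.inr hx, Or.inr hy⟩, hlt⟩
      · obtain ⟨rfl, rfl⟩ := Prod.mk.injEq .. ▸ hzxy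
        exact ⟨⟨Or.inr hz, Or.inl rfl⟩, hza⟩
      · obtain ⟨rfl, rfl⟩ := Prod.mk.injEq .. ▸ hzxy
        exact ⟨⟨Or.inl rfl, Or.inr hz⟩, haz⟩
  have d1 : Disjoint ((S ×ˢ S).filter fun p => p.1 < p.2)
      ((S.filter (· < a)).image fun x => (x, a)) := by
    rw [Finset.disjoint_left]
    rintro ⟨x, y⟩ hp hq
    simp only [mem_filter, mem_product] at hp
    simp only [mem_image, mem_filter] at hq
    obtain ⟨z, hz, hzq⟩ := hq
    obtain ⟨rfl, rfl⟩ := Prod.mk.injEq .. ▸ hzq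
    exact h hp.1.2
  have d2 : Disjoint (((S ×ˢ S).filter fun p => p.1 < p.2) ∪
      ((S.filter (· < a)).image fun x => (x, a)))
      ((S.filter (a < ·)).image fun y => (a, y)) := by
    rw [Finset.disjoint_left]
    rintro ⟨x, y⟩ hp hq
    simp only [mem_image, mem_filter] at hq
    obtain ⟨z, hz, hzq⟩ := hq
    obtain ⟨rfl, rfl⟩ := Prod.mk.injEq .. ▸ hzq
    simp only [mem_union, mem_filter, mem_product, mem_image] at hp
    rcases hp with ⟨⟨ha, _⟩, _⟩ | ⟨w, hw, hwq⟩
    · exact h ha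
    · obtain ⟨rfl, _⟩ := Prod.mk.injEq .. ▸ hwq
      exact h hw.1
  unfold distMultiset
  rw [key, ← Finset.disjUnion_eq_union _ _ d2, disjUnion_val',
    ← Finset.disjUnion_eq_union _ _ d1, disjUnion_val',
    Multiset.map_add, Multiset.map_add]
  rw [Finset.image_val_of_injOn (by intro x _ y _ hxy; exact (Prod.mk.injEq .. ▸ hxy).1),
      Finset.image_val_of_injOn (by intro x _ y _ hxy; exact (Prod.mk.injEq .. ▸ hxy).2)]
  rw [Multiset.map_map, Multiset.map_map]
  have e1 : ((fun p : ℤ × ℤ => (p.2 - p.1).natAbs) ∘ fun x => (x, a)) =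
      fun x => (a - x).natAbs := by funext x; simp
  have e2 : ((fun p : ℤ × ℤ => (p.2 - p.1).natAbs) ∘ fun y => (a, y)) =
      fun y => (a - y).natAbs := by funext y; simp only [Function.comp]; omega
  rw [e1, e2, add_assoc]
  congr 1
  unfold D
  rw [← Multiset.map_add]
  congr 1
  have : S.filter (a < ·) = S.filter (¬ · < a) := by
    apply Finset.filter_congr
    intro x hx
    have : x ≠ a := fun hxa => h (hxa ▸ hx)
    simp only [not_lt, iff_iff_implies_and_implies]
    constructor <;> intro <;> [exact le_of_lt ‹_›; exact lt_of_le_of_ne ‹_› (Ne.symm this)]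
  rw [this]
  rw [Finset.filter_val, Finset.filter_val, Multiset.filter_add_not]


lemma heads (k : ℤ) (hk : 12 ≤ k) :
    D (k-1) ({0,4,5,6} : Finset ℤ) + D (k-2) ({0,1,5,6,7} : Finset ℤ)
      + D (k+1) ({0,1,5,6,7} : Finset ℤ)
    = D (k-2) ({0,4,5,6} : Finset ℤ) + D (k+1) ({0,4,5,6} : Finset ℤ)
      + D k ({0,1,5,6,7} : Finset ℤ) + {(k-9).natAbs} := by
  obtain ⟨n, rfl⟩ : ∃ n : ℕ, k = (n:ℤ) + 12 := ⟨(k-12).toNat, by omega⟩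
  rw [D_HY, D_HY, D_HY, D_HX, D_HX, D_HX]
  simp only [Multiset.insert_eq_cons, ← Multiset.singleton_add,
    show ((n:ℤ)+12-1-0).natAbs = n+11 from by omega,
    show ((n:ℤ)+12-1-4).natAbs = n+7 from by omega,
    show ((n:ℤ)+12-1-5).natAbs = n+6 from by omega,
    show ((n:ℤ)+12-1-6).natAbs = n+5 from by omega,
    show ((n:ℤ)+12-2-0).natAbs = n+10 from by omega,
    show ((n:ℤ)+12-2-1).natAbs = n+9 from by omega,
    show ((n:ℤ)+12-2-5).natAbs = n+5 from by omega,
    show ((n:ℤ)+12-2-6).natAbs = n+4 from by omega,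
    show ((n:ℤ)+12-2-7).natAbs = n+3 from by omega,
    show ((n:ℤ)+12+1-0).natAbs = n+13 from by omega,
    show ((n:ℤ)+12+1-1).natAbs = n+12 from by omega,
    show ((n:ℤ)+12+1-5).natAbs = n+8 from by omega,
    show ((n:ℤ)+12+1-6).natAbs = n+7 from by omega,
    show ((n:ℤ)+12+1-7).natAbs = n+6 from by omega,
    show ((n:ℤ)+12-2-4).natAbs = n+6 from by omega,
    show ((n:ℤ)+12+1-4).natAbs = n+9 from by omega,
    show ((n:ℤ)+12-0).natAbs = n+12 from by omega,
    show ((n:ℤ)+12-1).natAbs = n+11 from by omega,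
    show ((n:ℤ)+12-5).natAbs = n+7 from by omega,
    show ((n:ℤ)+12-6).natAbs = n+6 from by omega,
    show ((n:ℤ)+12-7).natAbs = n+5 from by omega,
    show ((n:ℤ)+12-9).natAbs = n+3 from by omega    ]
  abel

lemma D_insert (a b : ℤ) (S : Finset ℤ) (h : b ∉ S) :
    D a (insert b S) = (a - b).natAbs ::ₘ D a S := by
  unfold D; rw [Finset.insert_val_of_notMem h, Multiset.map_cons]

lemma D_union (a : ℤ) (S T : Finset ℤ) (h : Disjoint S T) :
    D a (S ∪ T) = D a S + D a T := by
  unfold D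
  rw [← Finset.disjUnion_eq_union _ _ h]
  show Multiset.map _ (S.val + T.val) = _
  rw [Multiset.map_add]

lemma hshift (k : ℤ) (hk : 12 ≤ k) :
    D (k-1) (Finset.Icc (9:ℤ) (k - 3)) + {(k-9).natAbs}
      = D k (Finset.Icc (9:ℤ) (k - 3)) + {2} := by
  have h1 : Finset.Icc (9:ℤ) (k-3) = insert (k-3) (Finset.Icc 9 (k-4)) := by
    ext x; simp [Finset.mem_Icc, Finset.mem_insert]; omega
  have h2 : Finset.Icc (8:ℤ) (k-4) = insert 8 (Finset.Icc 9 (k-4)) := by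
    ext x; simp [Finset.mem_Icc, Finset.mem_insert]; omega
  have hm1 : (k-3) ∉ Finset.Icc (9:ℤ) (k-4) := by simp [Finset.mem_Icc]; omega
  have hm2 : (8:ℤ) ∉ Finset.Icc (9:ℤ) (k-4) := by simp [Finset.mem_Icc]
  have hDk : D k (Finset.Icc (9:ℤ) (k - 3)) = D (k-1) (Finset.Icc 8 (k-4)) := by
    unfold D
    have hmap : Finset.Icc (9:ℤ) (k-3) = (Finset.Icc (8:ℤ) (k-4)).map (addRightEmbedding 1) := by
      rw [Finset.map_add_right_Icc]; congr 1 <;> ring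
    rw [hmap, Finset.map_val, Multiset.map_map]
    congr 1; funext x; simp only [Function.comp, addRightEmbedding_apply]; omega
  rw [hDk, h1, h2, D_insert _ _ _ hm1, D_insert _ _ _ hm2]
  rw [show ((k-1) - (k-3)).natAbs = 2 from by omega,
      show ((k-1) - 8).natAbs = (k-9).natAbs from by omega]
  simp only [← Multiset.singleton_add]
  abel

theorem recursive_family_homometric (k : ℤ) (hk : 12 ≤ k) :
    distMultiset (Xfam k) = distMultiset (Yfam k) := by
  refine Int.le_induction (motive := fun n _ => distMultiset (Xfam n) = distMultiset (Yfam n)) ?_ ?_ k hk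
  · decide
  · intro k hk ih
    have hX1 : Xfam k = insert k (({0, 1, 5, 6, 7} : Finset ℤ) ∪ Finset.Icc (9:ℤ) (k - 3)) := by
      unfold Xfam
      rw [show ({k} : Finset ℤ) = {k} from rfl, Finset.union_comm _ ({k} : Finset ℤ),
        ← Finset.insert_eq]
    have hX2 : Xfam (k+1) = insert (k+1) (insert (k-2) (({0, 1, 5, 6, 7} : Finset ℤ) ∪ Finset.Icc (9:ℤ) (k - 3))) := by
      unfold Xfam; ext x
      simp only [Finset.mem_union, Finset.mem_insert, Finset.mem_Icc, Finset.mem_singleton]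
      omega
    have hY1 : Yfam k = insert k (insert (k-1) (({0, 4, 5, 6} : Finset ℤ) ∪ Finset.Icc (9:ℤ) (k - 3))) := by
      unfold Yfam; ext x
      simp only [Finset.mem_union, Finset.mem_insert, Finset.mem_Icc, Finset.mem_singleton]
      omega
    have hY2 : Yfam (k+1) = insert (k+1) (insert k (insert (k-2) (({0, 4, 5, 6} : Finset ℤ) ∪ Finset.Icc (9:ℤ) (k - 3)))) := by
      unfold Yfam; ext x
      simp only [Finset.mem_union, Finset.mem_insert, Finset.mem_Icc, Finset.mem_singleton]
      omega
    have nX1 : k ∉ (({0, 1, 5, 6, 7} : Finset ℤ) ∪ Finset.Icc (9:ℤ) (k - 3)) := by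
      simp only [Finset.mem_union, Finset.mem_insert, Finset.mem_Icc, Finset.mem_singleton]; omega
    have nX2 : (k-2) ∉ (({0, 1, 5, 6, 7} : Finset ℤ) ∪ Finset.Icc (9:ℤ) (k - 3)) := by
      simp only [Finset.mem_union, Finset.mem_insert, Finset.mem_Icc, Finset.mem_singleton]; omega
    have nX3 : (k+1) ∉ insert (k-2) (({0, 1, 5, 6, 7} : Finset ℤ) ∪ Finset.Icc (9:ℤ) (k - 3)) := by
      simp only [Finset.mem_union, Finset.mem_insert, Finset.mem_Icc, Finset.mem_singleton]; omega
    have nY1 : (k-1) ∉ (({0, 4, 5, 6} : Finset ℤ) ∪ Finset.Icc (9:ℤ) (k - 3)) := by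
      simp only [Finset.mem_union, Finset.mem_insert, Finset.mem_Icc, Finset.mem_singleton]; omega
    have nY2 : k ∉ insert (k-1) (({0, 4, 5, 6} : Finset ℤ) ∪ Finset.Icc (9:ℤ) (k - 3)) := by
      simp only [Finset.mem_union, Finset.mem_insert, Finset.mem_Icc, Finset.mem_singleton]; omega
    have nY3 : (k-2) ∉ (({0, 4, 5, 6} : Finset ℤ) ∪ Finset.Icc (9:ℤ) (k - 3)) := by
      simp only [Finset.mem_union, Finset.mem_insert, Finset.mem_Icc, Finset.mem_singleton]; omega
    have nY4 : k ∉ insert (k-2) (({0, 4, 5, 6} : Finset ℤ) ∪ Finset.Icc (9:ℤ) (k - 3)) := by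
      simp only [Finset.mem_union, Finset.mem_insert, Finset.mem_Icc, Finset.mem_singleton]; omega
    have nY5 : (k+1) ∉ insert k (insert (k-2) (({0, 4, 5, 6} : Finset ℤ) ∪ Finset.Icc (9:ℤ) (k - 3))) := by
      simp only [Finset.mem_union, Finset.mem_insert, Finset.mem_Icc, Finset.mem_singleton]; omega
    have eX1 : distMultiset (Xfam k) = distMultiset (({0, 1, 5, 6, 7} : Finset ℤ) ∪ Finset.Icc (9:ℤ) (k - 3)) + D k (({0, 1, 5, 6, 7} : Finset ℤ) ∪ Finset.Icc (9:ℤ) (k - 3)) := by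
      rw [hX1, distMultiset_insert _ _ nX1]
    have eY1 : distMultiset (Yfam k)
        = distMultiset (({0, 4, 5, 6} : Finset ℤ) ∪ Finset.Icc (9:ℤ) (k - 3)) + D (k-1) (({0, 4, 5, 6} : Finset ℤ) ∪ Finset.Icc (9:ℤ) (k - 3)) + ({1} + D k (({0, 4, 5, 6} : Finset ℤ) ∪ Finset.Icc (9:ℤ) (k - 3))) := by
      rw [hY1, distMultiset_insert _ _ nY2, distMultiset_insert _ _ nY1,
        D_insert _ _ _ nY1, show (k - (k-1)).natAbs = 1 from by omega,
        ← Multiset.singleton_add]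
    have eX2 : distMultiset (Xfam (k+1))
        = distMultiset (({0, 1, 5, 6, 7} : Finset ℤ) ∪ Finset.Icc (9:ℤ) (k - 3)) + D (k-2) (({0, 1, 5, 6, 7} : Finset ℤ) ∪ Finset.Icc (9:ℤ) (k - 3)) + ({3} + D (k+1) (({0, 1, 5, 6, 7} : Finset ℤ) ∪ Finset.Icc (9:ℤ) (k - 3))) := by
      rw [hX2, distMultiset_insert _ _ nX3, distMultiset_insert _ _ nX2,
        D_insert _ _ _ nX2, show ((k+1) - (k-2)).natAbs = 3 from by omega,
        ← Multiset.singleton_add]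
    have eY2 : distMultiset (Yfam (k+1))
        = distMultiset (({0, 4, 5, 6} : Finset ℤ) ∪ Finset.Icc (9:ℤ) (k - 3)) + D (k-2) (({0, 4, 5, 6} : Finset ℤ) ∪ Finset.Icc (9:ℤ) (k - 3)) + ({2} + D k (({0, 4, 5, 6} : Finset ℤ) ∪ Finset.Icc (9:ℤ) (k - 3)))
          + ({1} + ({3} + D (k+1) (({0, 4, 5, 6} : Finset ℤ) ∪ Finset.Icc (9:ℤ) (k - 3)))) := by
      rw [hY2, distMultiset_insert _ _ nY5, distMultiset_insert _ _ nY4,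
        distMultiset_insert _ _ nY3, D_insert _ _ _ nY3, D_insert _ _ _ nY4,
        D_insert _ _ _ nY3,
        show (k - (k-2)).natAbs = 2 from by omega,
        show ((k+1) - k).natAbs = 1 from by omega,
        show ((k+1) - (k-2)).natAbs = 3 from by omega]
      simp only [← Multiset.singleton_add]
    have hdX : Disjoint ({0, 1, 5, 6, 7} : Finset ℤ) (Finset.Icc (9:ℤ) (k - 3)) := by
      rw [Finset.disjoint_left]
      intro x hx hx'
      simp only [Finset.mem_insert, Finset.mem_singleton] at hx
      simp only [Finset.mem_Icc] at hx'
      omega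
    have hdY : Disjoint ({0, 4, 5, 6} : Finset ℤ) (Finset.Icc (9:ℤ) (k - 3)) := by
      rw [Finset.disjoint_left]
      intro x hx hx'
      simp only [Finset.mem_insert, Finset.mem_singleton] at hx
      simp only [Finset.mem_Icc] at hx'
      omega
    have hk12 : (12:ℤ) ≤ k := hk
    have K : D (k-1) (({0, 4, 5, 6} : Finset ℤ) ∪ Finset.Icc (9:ℤ) (k - 3)) + D (k-2) (({0, 1, 5, 6, 7} : Finset ℤ) ∪ Finset.Icc (9:ℤ) (k - 3)) + D (k+1) (({0, 1, 5, 6, 7} : Finset ℤ) ∪ Finset.Icc (9:ℤ) (k - 3))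
        = D (k-2) (({0, 4, 5, 6} : Finset ℤ) ∪ Finset.Icc (9:ℤ) (k - 3)) + D (k+1) (({0, 4, 5, 6} : Finset ℤ) ∪ Finset.Icc (9:ℤ) (k - 3)) + (D k (({0, 1, 5, 6, 7} : Finset ℤ) ∪ Finset.Icc (9:ℤ) (k - 3)) + {2}) := by
      apply add_right_cancel (b := ({(k-9).natAbs} : Multiset ℕ))
      rw [D_union _ _ _ hdY, D_union _ _ _ hdX, D_union _ _ _ hdX,
        D_union _ _ _ hdY, D_union _ _ _ hdY, D_union _ _ _ hdX]
      calc (D (k-1) ({0, 4, 5, 6} : Finset ℤ) + D (k-1) (Finset.Icc (9:ℤ) (k - 3))) + (D (k-2) ({0, 1, 5, 6, 7} : Finset ℤ) + D (k-2) (Finset.Icc (9:ℤ) (k - 3)))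
            + (D (k+1) ({0, 1, 5, 6, 7} : Finset ℤ) + D (k+1) (Finset.Icc (9:ℤ) (k - 3))) + {(k-9).natAbs}
          = (D (k-1) ({0, 4, 5, 6} : Finset ℤ) + D (k-2) ({0, 1, 5, 6, 7} : Finset ℤ) + D (k+1) ({0, 1, 5, 6, 7} : Finset ℤ))
            + (D (k-1) (Finset.Icc (9:ℤ) (k - 3)) + {(k-9).natAbs})
            + (D (k-2) (Finset.Icc (9:ℤ) (k - 3)) + D (k+1) (Finset.Icc (9:ℤ) (k - 3))) := by abel
        _ = (D (k-2) ({0, 4, 5, 6} : Finset ℤ) + D (k+1) ({0, 4, 5, 6} : Finset ℤ) + D k ({0, 1, 5, 6, 7} : Finset ℤ) + {(k-9).natAbs})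
            + (D k (Finset.Icc (9:ℤ) (k - 3)) + {2})
            + (D (k-2) (Finset.Icc (9:ℤ) (k - 3)) + D (k+1) (Finset.Icc (9:ℤ) (k - 3))) := by rw [heads k hk12, hshift k hk12]
        _ = (D (k-2) ({0, 4, 5, 6} : Finset ℤ) + D (k-2) (Finset.Icc (9:ℤ) (k - 3))) + (D (k+1) ({0, 4, 5, 6} : Finset ℤ) + D (k+1) (Finset.Icc (9:ℤ) (k - 3)))
            + ((D k ({0, 1, 5, 6, 7} : Finset ℤ) + D k (Finset.Icc (9:ℤ) (k - 3))) + {2}) + {(k-9).natAbs} := by abel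
    rw [eX2, eY2]
    apply add_right_cancel (b := D k (({0, 1, 5, 6, 7} : Finset ℤ) ∪ Finset.Icc (9:ℤ) (k - 3)))
    calc distMultiset (({0, 1, 5, 6, 7} : Finset ℤ) ∪ Finset.Icc (9:ℤ) (k - 3)) + D (k-2) (({0, 1, 5, 6, 7} : Finset ℤ) ∪ Finset.Icc (9:ℤ) (k - 3)) + ({3} + D (k+1) (({0, 1, 5, 6, 7} : Finset ℤ) ∪ Finset.Icc (9:ℤ) (k - 3))) + D k (({0, 1, 5, 6, 7} : Finset ℤ) ∪ Finset.Icc (9:ℤ) (k - 3))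
        = (distMultiset (({0, 1, 5, 6, 7} : Finset ℤ) ∪ Finset.Icc (9:ℤ) (k - 3)) + D k (({0, 1, 5, 6, 7} : Finset ℤ) ∪ Finset.Icc (9:ℤ) (k - 3)))
          + (D (k-2) (({0, 1, 5, 6, 7} : Finset ℤ) ∪ Finset.Icc (9:ℤ) (k - 3)) + D (k+1) (({0, 1, 5, 6, 7} : Finset ℤ) ∪ Finset.Icc (9:ℤ) (k - 3)) + {3}) := by abel
      _ = (distMultiset (({0, 4, 5, 6} : Finset ℤ) ∪ Finset.Icc (9:ℤ) (k - 3)) + D (k-1) (({0, 4, 5, 6} : Finset ℤ) ∪ Finset.Icc (9:ℤ) (k - 3)) + ({1} + D k (({0, 4, 5, 6} : Finset ℤ) ∪ Finset.Icc (9:ℤ) (k - 3))))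
          + (D (k-2) (({0, 1, 5, 6, 7} : Finset ℤ) ∪ Finset.Icc (9:ℤ) (k - 3)) + D (k+1) (({0, 1, 5, 6, 7} : Finset ℤ) ∪ Finset.Icc (9:ℤ) (k - 3)) + {3}) := by
            rw [← eX1, ← eY1, ih]
      _ = (distMultiset (({0, 4, 5, 6} : Finset ℤ) ∪ Finset.Icc (9:ℤ) (k - 3)) + D k (({0, 4, 5, 6} : Finset ℤ) ∪ Finset.Icc (9:ℤ) (k - 3)) + {1} + {3})
          + (D (k-1) (({0, 4, 5, 6} : Finset ℤ) ∪ Finset.Icc (9:ℤ) (k - 3)) + D (k-2) (({0, 1, 5, 6, 7} : Finset ℤ) ∪ Finset.Icc (9:ℤ) (k - 3)) + D (k+1) (({0, 1, 5, 6, 7} : Finset ℤ) ∪ Finset.Icc (9:ℤ) (k - 3))) := by abel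
      _ = (distMultiset (({0, 4, 5, 6} : Finset ℤ) ∪ Finset.Icc (9:ℤ) (k - 3)) + D k (({0, 4, 5, 6} : Finset ℤ) ∪ Finset.Icc (9:ℤ) (k - 3)) + {1} + {3})
          + (D (k-2) (({0, 4, 5, 6} : Finset ℤ) ∪ Finset.Icc (9:ℤ) (k - 3)) + D (k+1) (({0, 4, 5, 6} : Finset ℤ) ∪ Finset.Icc (9:ℤ) (k - 3)) + (D k (({0, 1, 5, 6, 7} : Finset ℤ) ∪ Finset.Icc (9:ℤ) (k - 3)) + {2})) := by rw [K]
      _ = distMultiset (({0, 4, 5, 6} : Finset ℤ) ∪ Finset.Icc (9:ℤ) (k - 3)) + D (k-2) (({0, 4, 5, 6} : Finset ℤ) ∪ Finset.Icc (9:ℤ) (k - 3)) + ({2} + D k (({0, 4, 5, 6} : Finset ℤ) ∪ Finset.Icc (9:ℤ) (k - 3)))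
          + ({1} + ({3} + D (k+1) (({0, 4, 5, 6} : Finset ℤ) ∪ Finset.Icc (9:ℤ) (k - 3)))) + D k (({0, 1, 5, 6, 7} : Finset ℤ) ∪ Finset.Icc (9:ℤ) (k - 3)) := by abel
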